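/- If z ∈ M lies on G₀ (i.e. gᵢ(z) = 0 for at least one i), then for every d ∈ D and every active index i ∈ I(z) one has the Lie-derivative inequality ∇gᵢ(z) · f(z, d) ≤ 0; equivalently, max_{d ∈ D} max_{i ∈ I(z)} L_f gᵢ(z, d) ≤ 0. In particular, every point of the usable part ∂M ∩ G₀ satisfies this condition. -/

import Mathlib

open MeasureTheory Set Filter Topology

/-- An admissible disturbance: a Lebesgue measurable function taking values in `D`
on `[t₀, ∞)`. -/
def Admissible {m : ℕ} (D : Set (Fin m → ℝ)) (t₀ : ℝ) (d : ℝ → Fin m → ℝ) : Prop :=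
  Measurable d ∧ ∀ t, t₀ ≤ t → d t ∈ D

/-- A solution of `ẋ = f(x, d)` from `x₀` at time `t₀` under the disturbance `d`:
an (absolutely continuous) curve satisfying the integral equation
`x t = x₀ + ∫_{t₀}^{t} f (x s) (d s) ds` for all `t ≥ t₀`. -/
def IsSolution {n m : ℕ} (f : (Fin n → ℝ) → (Fin m → ℝ) → Fin n → ℝ)
    (t₀ : ℝ) (x₀ : Fin n → ℝ) (d : ℝ → Fin m → ℝ) (x : ℝ → Fin n → ℝ) : Prop :=
  x t₀ = x₀ ∧ ∀ t, t₀ ≤ t →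
    IntervalIntegrable (fun s => f (x s) (d s)) volume t₀ t ∧
    x t = x₀ + ∫ s in t₀..t, f (x s) (d s)

/-- Assumption (A3): every initial condition and every admissible disturbance admit a
unique solution, which is bounded on every finite time interval. -/
def A3 {n m : ℕ} (f : (Fin n → ℝ) → (Fin m → ℝ) → Fin n → ℝ)
    (D : Set (Fin m → ℝ)) (t₀ : ℝ) : Prop :=
  ∀ x₀ : Fin n → ℝ, ∀ d, Admissible D t₀ d →
    (∃ x, IsSolution f t₀ x₀ d x ∧ ∀ T, t₀ ≤ T → ∃ C, ∀ t ∈ Icc t₀ T, ‖x t‖ ≤ C) ∧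
    (∀ x y, IsSolution f t₀ x₀ d x → IsSolution f t₀ x₀ d y → ∀ t, t₀ ≤ t → x t = y t)

/-- Robust positive invariance of a set `Ω`. -/
def IsRPI {n m : ℕ} (f : (Fin n → ℝ) → (Fin m → ℝ) → Fin n → ℝ)
    (D : Set (Fin m → ℝ)) (t₀ : ℝ) (Ω : Set (Fin n → ℝ)) : Prop :=
  ∀ x₀ ∈ Ω, ∀ d, Admissible D t₀ d → ∀ x, IsSolution f t₀ x₀ d x →
    ∀ t, t₀ ≤ t → x t ∈ Ω

/-- The set `R`: all initial states in `G = {x : gᵢ x ≤ 0 ∀ i}` from which every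
admissible solution remains in `G` for all future time. -/
def Rset {n m p : ℕ} (f : (Fin n → ℝ) → (Fin m → ℝ) → Fin n → ℝ)
    (D : Set (Fin m → ℝ)) (t₀ : ℝ) (g : Fin p → (Fin n → ℝ) → ℝ) : Set (Fin n → ℝ) :=
  {x₀ | (∀ i, g i x₀ ≤ 0) ∧
    ∀ d, Admissible D t₀ d → ∀ x, IsSolution f t₀ x₀ d x →
      ∀ t, t₀ ≤ t → ∀ i, g i (x t) ≤ 0}

/-- Assumption (A2): `f` is `C²` with respect to `d ∈ D`, and for every `d` in an open set
containing `D`, `f` is `C²` with respect to `x`. -/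
def A2 {n m : ℕ} (f : (Fin n → ℝ) → (Fin m → ℝ) → Fin n → ℝ)
    (D : Set (Fin m → ℝ)) : Prop :=
  (∀ x, ContDiffOn ℝ 2 (f x) D) ∧
  ∃ U : Set (Fin m → ℝ), IsOpen U ∧ D ⊆ U ∧ ∀ d ∈ U, ContDiff ℝ 2 fun x => f x d

/-- Assumption (A4): the velocity set `f(x, D)` is convex for every `x`. -/
def A4 {n m : ℕ} (f : (Fin n → ℝ) → (Fin m → ℝ) → Fin n → ℝ)
    (D : Set (Fin m → ℝ)) : Prop :=
  ∀ x : Fin n → ℝ, Convex ℝ (f x '' D)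
private lemma usable_key {n m p : ℕ} (f : (Fin n → ℝ) → (Fin m → ℝ) → Fin n → ℝ)
    (D : Set (Fin m → ℝ)) (t₀ : ℝ) (g : Fin p → (Fin n → ℝ) → ℝ)
    (hf : Continuous fun q : (Fin n → ℝ) × (Fin m → ℝ) => f q.1 q.2)
    (hA3 : A3 f D t₀) (hg : ∀ i, ContDiff ℝ 2 (g i)) :
    ∀ z ∈ closure (Rset f D t₀ g), ∀ d₀ ∈ D, ∀ i, g i z = 0 →
      fderiv ℝ (g i) z (f z d₀) ≤ 0 := by
  intro z hz d₀ hd₀ i hgz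
  by_contra hpos
  push_neg at hpos
  -- continuity of y ↦ f y d₀ and of y ↦ fderiv (g i) y (f y d₀)
  have hfc : Continuous fun y => f y d₀ :=
    hf.comp (continuous_id.prodMk continuous_const)
  have hgdiff : Differentiable ℝ (g i) := (hg i).differentiable two_ne_zero
  have hφ : Continuous fun y => fderiv ℝ (g i) y (f y d₀) :=
    ((hg i).continuous_fderiv two_ne_zero).clm_apply hfc
  set φ : (Fin n → ℝ) → ℝ := fun y => fderiv ℝ (g i) y (f y d₀) with hφdef
  set c : ℝ := φ z with hc
  have hc2 : 0 < c / 2 := by positivity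
  -- choose r with φ ≥ c/2 on closedBall z r
  obtain ⟨r₀, hr₀, hr₀prop⟩ := Metric.continuousAt_iff.1 hφ.continuousAt (c / 2) hc2
  set r := r₀ / 2 with hrdef
  have hr : 0 < r := by positivity
  have hballφ : ∀ y ∈ Metric.closedBall z r, c / 2 ≤ φ y := by
    intro y hy
    have : dist y z < r₀ := lt_of_le_of_lt (Metric.mem_closedBall.1 hy) (by linarith)
    have := hr₀prop this
    have habs : |φ y - c| < c / 2 := by
      simpa [Real.dist_eq] using this
    have := abs_lt.1 habs
    linarith [this.1]
  -- bound on f on the ball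
  obtain ⟨K₀, hK₀⟩ := (isCompact_closedBall z r).exists_bound_of_continuousOn
    hfc.continuousOn
  set K := max K₀ 1 with hKdef
  have hK1 : (1:ℝ) ≤ K := le_max_right _ _
  have hKpos : (0:ℝ) < K := lt_of_lt_of_le one_pos hK1
  have hKb : ∀ y ∈ Metric.closedBall z r, ‖f y d₀‖ ≤ K :=
    fun y hy => le_trans (hK₀ y hy) (le_max_left _ _)
  set δ : ℝ := r / (2 * K) with hδdef
  have hδ : 0 < δ := by positivity
  have hKδ : K * δ = r / 2 := by
    field_simp [hδdef]
    rw [hδdef]; field_simp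
  -- choose z₀ ∈ Rset close to z
  have hgc : ContinuousAt (g i) z := (hg i).continuous.continuousAt
  obtain ⟨ε₂, hε₂, hε₂prop⟩ := Metric.continuousAt_iff.1 hgc (c / 2 * δ) (by positivity)
  obtain ⟨z₀, hz₀R, hz₀d⟩ := Metric.mem_closure_iff.1 hz (min (r / 2) ε₂)
    (lt_min (by positivity) hε₂)
  have hz₀r : dist z₀ z < r / 2 := by
    have := hz₀d; rw [dist_comm] at this
    exact lt_of_lt_of_le this (min_le_left _ _)
  have hz₀g : -(c / 2 * δ) < g i z₀ := by
    have : dist z₀ z < ε₂ := by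
      have := hz₀d; rw [dist_comm] at this
      exact lt_of_lt_of_le this (min_le_right _ _)
    have := hε₂prop this
    rw [Real.dist_eq, hgz, sub_zero] at this
    linarith [(abs_lt.1 this).1]
  -- constant disturbance and solution
  set d : ℝ → Fin m → ℝ := fun _ => d₀ with hddef
  have hadm : Admissible D t₀ d := ⟨measurable_const, fun _ _ => hd₀⟩
  obtain ⟨⟨x, hx, -⟩, -⟩ := hA3 z₀ d hadm
  set T : ℝ := t₀ + δ with hTdef
  have hT : t₀ ≤ T := by linarith
  set F : ℝ → Fin n → ℝ := fun s => f (x s) (d s) with hFdef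
  have hint : ∀ t, t₀ ≤ t → IntervalIntegrable F volume t₀ t := fun t ht => (hx.2 t ht).1
  have heq : ∀ t, t₀ ≤ t → x t = z₀ + ∫ s in t₀..t, F s := fun t ht => (hx.2 t ht).2
  -- continuity of x on Icc t₀ T'
  have hxcont : ∀ T', t₀ ≤ T' → ContinuousOn x (Icc t₀ T') := by
    intro T' hT'
    have hprim : ContinuousOn (fun b => ∫ s in t₀..b, F s) (Icc t₀ T') := by
      have := intervalIntegral.continuousOn_primitive_interval' (hint T' hT')
        (left_mem_uIcc (a := t₀) (b := T'))
      rwa [uIcc_of_le hT'] at this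
    have : ContinuousOn (fun b => z₀ + ∫ s in t₀..b, F s) (Icc t₀ T') :=
      continuousOn_const.add hprim
    exact this.congr fun t ht => heq t ht.1
  -- x stays in the closed ball on [t₀, T]
  have hxt₀ : x t₀ = z₀ := hx.1
  have hdistc : Continuous (fun y : Fin n → ℝ => dist y z) :=
    continuous_id.dist continuous_const
  have hball : ∀ s ∈ Icc t₀ T, dist (x s) z < r := by
    by_contra hB
    push_neg at hB
    obtain ⟨s₀, hs₀, hrs⟩ := hB
    set B := {s | s ∈ Icc t₀ T ∧ r ≤ dist (x s) z} with hBdef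
    have hBne : B.Nonempty := ⟨s₀, hs₀, hrs⟩
    have hBclosed : IsClosed B := by
      have : B = Icc t₀ T ∩ (fun s => dist (x s) z) ⁻¹' (Ici r) := by
        ext u
        simp only [hBdef, Set.mem_setOf_eq, Set.mem_inter_iff, Set.mem_preimage,
          Set.mem_Ici]
      rw [this]
      exact ContinuousOn.preimage_isClosed_of_isClosed
        (hdistc.comp_continuousOn (hxcont T hT)) isClosed_Icc isClosed_Ici
    have hBbdd : BddBelow B := ⟨t₀, fun u hu => hu.1.1⟩
    set τ := sInf B with hτdef
    have hτB : τ ∈ B := hBclosed.csInf_mem hBne hBbdd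
    have hτIcc : τ ∈ Icc t₀ T := hτB.1
    have hτr : r ≤ dist (x τ) z := hτB.2
    have ht₀lt : dist (x t₀) z < r := by
      rw [hxt₀]; linarith [hz₀r]
    have hτne : t₀ < τ := by
      rcases lt_or_eq_of_le hτIcc.1 with h | h
      · exact h
      · exact absurd hτr (by rw [← h]; linarith)
    have hlt : ∀ u, t₀ ≤ u → u < τ → dist (x u) z < r := by
      intro u h1 h2
      by_contra hcon
      push_neg at hcon
      have : u ∈ B := ⟨⟨h1, le_trans h2.le hτIcc.2⟩, hcon⟩
      exact absurd (csInf_le hBbdd this) (not_le.2 h2)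
    have hle : ∀ u ∈ Icc t₀ τ, dist (x u) z ≤ r := by
      intro u hu
      rcases lt_or_eq_of_le hu.2 with h | h
      · exact (hlt u hu.1 h).le
      · -- u = τ : use left limit
        rw [h]
        have hcw : ContinuousWithinAt (fun s => dist (x s) z) (Ioo t₀ τ) τ := by
          have := (hdistc.comp_continuousOn (hxcont T hT)) τ ⟨hτIcc.1, hτIcc.2⟩
          exact this.mono (fun v hv => ⟨hv.1.le, le_trans hv.2.le hτIcc.2⟩)
        have hne : (𝓝[Ioo t₀ τ] τ).NeBot := by
          rw [nhdsWithin_Ioo_eq_nhdsLT hτne]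
          infer_instance
        refine le_of_tendsto hcw.tendsto ?_
        exact Filter.eventually_of_mem self_mem_nhdsWithin
          (fun v hv => (hlt v hv.1.le hv.2).le)
    -- integral estimate
    have hxτ : x τ = z₀ + ∫ s in t₀..τ, F s := heq τ hτIcc.1
    have hnorm : ‖∫ s in t₀..τ, F s‖ ≤ K * |τ - t₀| := by
      apply intervalIntegral.norm_integral_le_of_norm_le_const
      intro u hu
      rw [uIoc_of_le hτIcc.1] at hu
      exact hKb _ (Metric.mem_closedBall.2 (hle u ⟨hu.1.le, hu.2⟩))
    have habs : |τ - t₀| ≤ δ := by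
      rw [abs_of_nonneg (by linarith [hτIcc.1])]
      linarith [hτIcc.2]
    have h1 : dist (x τ) z₀ ≤ r / 2 := by
      rw [dist_eq_norm, hxτ, add_sub_cancel_left]
      calc ‖∫ s in t₀..τ, F s‖ ≤ K * |τ - t₀| := hnorm
        _ ≤ K * δ := by nlinarith
        _ = r / 2 := hKδ
    have : dist (x τ) z < r := by
      calc dist (x τ) z ≤ dist (x τ) z₀ + dist z₀ z := dist_triangle _ _ _
        _ < r / 2 + r / 2 := by linarith
        _ = r := by ring
    linarith
  -- derivative of x at interior points
  have hderiv : ∀ s ∈ Ioo t₀ T, HasDerivAt x (F s) s := by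
    intro s hs
    have hsT1 : t₀ ≤ T + 1 := by linarith
    have hxC : ContinuousAt x s := by
      apply (hxcont (T + 1) hsT1).continuousAt
      exact Icc_mem_nhds hs.1 (by linarith [hs.2])
    have hFC : ContinuousAt F s := by
      have : ContinuousAt (fun y => f y d₀) (x s) := hfc.continuousAt
      exact this.comp hxC
    have hFm : StronglyMeasurableAtFilter F (𝓝 s) := by
      refine ⟨Ioo t₀ (T + 1), Ioo_mem_nhds hs.1 (by linarith [hs.2]), ?_⟩
      apply ContinuousOn.aestronglyMeasurable _ measurableSet_Ioo
      intro u hu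
      have hxu : ContinuousWithinAt x (Ioo t₀ (T+1)) u :=
        ((hxcont (T+1) hsT1) u ⟨hu.1.le, hu.2.le⟩).mono
          (fun v hv => ⟨hv.1.le, hv.2.le⟩)
      exact (hfc.continuousAt.comp_continuousWithinAt hxu)
    have hprim : HasDerivAt (fun u => ∫ s in t₀..u, F s) (F s) s :=
      intervalIntegral.integral_hasDerivAt_right (hint s hs.1.le) hFm hFC
    have : HasDerivAt (fun u => z₀ + ∫ s in t₀..u, F s) (F s) s := by
      exact hprim.const_add z₀
    apply this.congr_of_eventuallyEq
    filter_upwards [Ioi_mem_nhds hs.1] with u hu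
    exact heq u (le_of_lt hu)
  -- FTC for g i ∘ x
  set ψ' : ℝ → ℝ := fun s => φ (x s) with hψ'def
  have hψ'cont : ContinuousOn ψ' (Icc t₀ T) := hφ.comp_continuousOn (hxcont T hT)
  have hψ'int : IntervalIntegrable ψ' volume t₀ T := by
    apply ContinuousOn.intervalIntegrable
    rwa [uIcc_of_le hT]
  have hψcont : ContinuousOn (fun s => g i (x s)) (Icc t₀ T) :=
    (hg i).continuous.comp_continuousOn (hxcont T hT)
  have hψderiv : ∀ s ∈ Ioo t₀ T, HasDerivWithinAt (fun s => g i (x s)) (ψ' s) (Ioi s) s := by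
    intro s hs
    have h1 : HasDerivAt (fun s => g i (x s)) (fderiv ℝ (g i) (x s) (F s)) s :=
      (hgdiff (x s)).hasFDerivAt.comp_hasDerivAt s (hderiv s hs)
    exact h1.hasDerivWithinAt
  have hFTC : ∫ s in t₀..T, ψ' s = g i (x T) - g i (x t₀) :=
    intervalIntegral.integral_eq_sub_of_hasDeriv_right_of_le hT hψcont hψderiv hψ'int
  -- lower bound on the integral
  have hlower : c / 2 * δ ≤ ∫ s in t₀..T, ψ' s := by
    have hconst : ∫ _ in t₀..T, (c / 2 : ℝ) = c / 2 * δ := by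
      rw [intervalIntegral.integral_const, smul_eq_mul]
      rw [hTdef]; ring
    rw [← hconst]
    apply intervalIntegral.integral_mono_on hT (intervalIntegrable_const) hψ'int
    intro s hs
    exact hballφ (x s) (Metric.mem_closedBall.2 (hball s hs).le)
  -- contradiction with invariance
  have hfinal : g i (x T) ≤ 0 := hz₀R.2 d hadm x hx T hT i
  rw [hxt₀] at hFTC
  nlinarith [hz₀g, hlower, hFTC, hfinal]

/-- at any point `z` of the maximal robust positively invariant set `M` lying on
`G₀` (some constraint active), the Lie derivative `L_f gᵢ(z, d) = ∇gᵢ(z)·f(z, d)` is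
nonpositive for every `d ∈ D` and every active index `i`; in particular every point of the
usable part `∂M ∩ G₀` satisfies this condition. -/
theorem usable_part_condition {n m p : ℕ} (f : (Fin n → ℝ) → (Fin m → ℝ) → Fin n → ℝ)
    (D : Set (Fin m → ℝ)) (t₀ : ℝ) (g : Fin p → (Fin n → ℝ) → ℝ)
    (hf : Continuous fun q : (Fin n → ℝ) × (Fin m → ℝ) => f q.1 q.2)
    (hDcomp : IsCompact D) (hDconv : Convex ℝ D)
    (hA2 : A2 f D) (hA3 : A3 f D t₀) (hA4 : A4 f D)
    (hg : ∀ i, ContDiff ℝ 2 (g i)) :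
    (∀ z ∈ Rset f D t₀ g, (∃ i, g i z = 0) →
      ∀ d ∈ D, ∀ i, g i z = 0 → fderiv ℝ (g i) z (f z d) ≤ 0) ∧
    (∀ z ∈ frontier (Rset f D t₀ g) ∩ {x | ∃ i, g i x = 0},
      ∀ d ∈ D, ∀ i, g i z = 0 → fderiv ℝ (g i) z (f z d) ≤ 0) := by
  constructor
  · intro z hz _ d hd i hgi
    exact usable_key f D t₀ g hf hA3 hg z (subset_closure hz) d hd i hgi
  · intro z hz d hd i hgi
    exact usable_key f D t₀ g hf hA3 hg z (frontier_subset_closure (s := Rset f D t₀ g) hz.1) d hd i hgi
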